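/- Let γ > 0, let 0 < r1 ≤ r2, let c : [r1, r2] → ℝ be continuous with c ≥ 0, and let φ : [r1, r2] → ℂ be continuously differentiable. Define ρ : [r1, r2] → ℂ by ρ(r) = −φ′(r) + c(r)·φ(r). Then (1/2)·r1^{γ}·|φ(r1)|² + (γ/4)·∫_{r1}^{r2} r^{γ−1}·|φ(r)|² dr ≤ (1/2)·r2^{γ}·|φ(r2)|² + γ^{−1}·∫_{r1}^{r2} r^{γ+1}·|ρ(r)|² dr. -/

import Mathlib

open MeasureTheory Set

private lemma amgm_aux (γ a b : ℝ) (hγ : 0 < γ) : a * b ≤ γ/4 * a^2 + γ⁻¹ * b^2 := by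
  have key : γ/4*a^2 + γ⁻¹*b^2 - a*b = (γ*a-2*b)^2/(4*γ) := by field_simp; ring
  nlinarith [div_nonneg (sq_nonneg (γ*a-2*b)) (by positivity : (0:ℝ) ≤ 4*γ)]

private lemma normsq_deriv (φ φ' : ℝ → ℂ) (s : Set ℝ) (r : ℝ)
    (h : HasDerivWithinAt φ (φ' r) s r) :
    HasDerivWithinAt (fun t => ‖φ t‖^2) (2 * ((starRingEnd ℂ) (φ r) * φ' r).re) s r := by
  have hconj : HasDerivWithinAt (fun t => (starRingEnd ℂ) (φ t)) ((starRingEnd ℂ) (φ' r)) s r :=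
    Complex.conjCLE.toContinuousLinearMap.hasFDerivAt.comp_hasDerivWithinAt r h
  have hmul := h.mul hconj
  have hre := Complex.reCLM.hasFDerivAt.comp_hasDerivWithinAt r hmul
  have hfun : (fun t => (Complex.reCLM) (φ t * (starRingEnd ℂ) (φ t))) = fun t => ‖φ t‖^2 := by
    funext t
    simp [Complex.mul_conj, Complex.normSq_eq_norm_sq, ← Complex.ofReal_pow,
      Complex.ofReal_re]
  have hval : (Complex.reCLM) (φ' r * (starRingEnd ℂ) (φ r) + φ r * (starRingEnd ℂ) (φ' r))
      = 2 * ((starRingEnd ℂ) (φ r) * φ' r).re := by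
    simp [Complex.add_re, Complex.mul_re, Complex.conj_re, Complex.conj_im]; ring
  rw [← hfun, ← hval]
  exact hre

theorem transport_energy_estimate (γ r1 r2 : ℝ) (hγ : 0 < γ) (hr1 : 0 < r1) (hr12 : r1 ≤ r2)
    (c : ℝ → ℝ) (hccont : ContinuousOn c (Set.Icc r1 r2))
    (hcpos : ∀ r ∈ Set.Icc r1 r2, 0 ≤ c r)
    (φ φ' : ℝ → ℂ)
    (hderiv : ∀ r ∈ Set.Icc r1 r2, HasDerivWithinAt φ (φ' r) (Set.Icc r1 r2) r)
    (hφ'cont : ContinuousOn φ' (Set.Icc r1 r2)) :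
    1 / 2 * r1 ^ γ * ‖φ r1‖ ^ 2 + γ / 4 * ∫ r in r1..r2, r ^ (γ - 1) * ‖φ r‖ ^ 2
      ≤ 1 / 2 * r2 ^ γ * ‖φ r2‖ ^ 2 +
        γ⁻¹ * ∫ r in r1..r2, r ^ (γ + 1) * ‖-φ' r + (c r : ℂ) * φ r‖ ^ 2 := by
  have hpos : ∀ r ∈ Set.Icc r1 r2, 0 < r := fun r hr => lt_of_lt_of_le hr1 hr.1
  have hφcont : ContinuousOn φ (Set.Icc r1 r2) := fun r hr => (hderiv r hr).continuousWithinAt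
  set ρ : ℝ → ℂ := fun r => -φ' r + (c r : ℂ) * φ r with hρdef
  set F : ℝ → ℝ := fun t => 1/2 * t ^ γ * ‖φ t‖^2 with hFdef
  set G : ℝ → ℝ := fun t =>
      1/2 * (γ * t ^ (γ-1)) * ‖φ t‖^2 + 1/2 * t ^ γ * (2 * ((starRingEnd ℂ) (φ t) * φ' t).re)
    with hGdef
  set H : ℝ → ℝ := fun t =>
      γ/4 * (t ^ (γ-1) * ‖φ t‖^2) - γ⁻¹ * (t ^ (γ+1) * ‖ρ t‖^2) with hHdef
  -- derivative of F
  have hFderiv : ∀ r ∈ Set.Icc r1 r2, HasDerivWithinAt F (G r) (Set.Icc r1 r2) r := by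
    intro r hr
    have h1 : HasDerivWithinAt (fun t : ℝ => 1/2 * t ^ γ) (1/2 * (γ * r ^ (γ-1)))
        (Set.Icc r1 r2) r :=
      ((Real.hasDerivAt_rpow_const (Or.inl (hpos r hr).ne')).const_mul
        (1/2)).hasDerivWithinAt
    exact h1.mul (normsq_deriv φ φ' _ r (hderiv r hr))
  -- continuity facts
  have hrpow : ∀ β : ℝ, ContinuousOn (fun t : ℝ => t ^ β) (Set.Icc r1 r2) := by
    intro β
    exact ContinuousOn.rpow_const continuousOn_id (fun x hx => Or.inl (hpos x hx).ne')
  have hnφ : ContinuousOn (fun t => ‖φ t‖^2) (Set.Icc r1 r2) := (hφcont.norm).pow 2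
  have hρcont : ContinuousOn ρ (Set.Icc r1 r2) := by
    exact (hφ'cont.neg).add ((Complex.continuous_ofReal.comp_continuousOn hccont).mul hφcont)
  have hnρ : ContinuousOn (fun t => ‖ρ t‖^2) (Set.Icc r1 r2) := (hρcont.norm).pow 2
  have hFcont : ContinuousOn F (Set.Icc r1 r2) := (continuousOn_const.mul (hrpow γ)).mul hnφ
  have hGcont : ContinuousOn G (Set.Icc r1 r2) := by
    apply ContinuousOn.add
    · exact (continuousOn_const.mul (continuousOn_const.mul (hrpow (γ-1)))).mul hnφ
    · apply (continuousOn_const.mul (hrpow γ)).mul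
      apply continuousOn_const.mul
      exact Complex.continuous_re.comp_continuousOn
        ((Complex.continuous_conj.comp_continuousOn hφcont).mul hφ'cont)
  have hHcont : ContinuousOn H (Set.Icc r1 r2) := by
    apply ContinuousOn.sub
    · exact continuousOn_const.mul ((hrpow (γ-1)).mul hnφ)
    · exact continuousOn_const.mul ((hrpow (γ+1)).mul hnρ)
  have huIcc : Set.uIcc r1 r2 = Set.Icc r1 r2 := Set.uIcc_of_le hr12
  have hGint : IntervalIntegrable G volume r1 r2 :=
    (hGcont.mono (by rw [huIcc])).intervalIntegrable
  have hHint : IntervalIntegrable H volume r1 r2 :=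
    (hHcont.mono (by rw [huIcc])).intervalIntegrable
  have hAint : IntervalIntegrable (fun t => t ^ (γ-1) * ‖φ t‖^2) volume r1 r2 :=
    (((hrpow (γ-1)).mul hnφ).mono (by rw [huIcc])).intervalIntegrable
  have hBint : IntervalIntegrable (fun t => t ^ (γ+1) * ‖ρ t‖^2) volume r1 r2 :=
    (((hrpow (γ+1)).mul hnρ).mono (by rw [huIcc])).intervalIntegrable
  -- FTC
  have hFTC : ∫ t in r1..r2, G t = F r2 - F r1 := by
    apply intervalIntegral.integral_eq_sub_of_hasDeriv_right_of_le hr12 hFcont _ hGint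
    intro x hx
    exact ((hFderiv x (Set.mem_Icc_of_Ioo hx)).hasDerivAt
      (Icc_mem_nhds hx.1 hx.2)).hasDerivWithinAt
  -- pointwise inequality H ≤ G
  have hpt : ∀ r ∈ Set.Icc r1 r2, H r ≤ G r := by
    intro r hr
    have hrpos := hpos r hr
    have hre1 : ((starRingEnd ℂ) (φ r) * φ' r).re
        = c r * ‖φ r‖^2 - ((starRingEnd ℂ) (φ r) * ρ r).re := by
      have hφ'eq : φ' r = (c r : ℂ) * φ r - ρ r := by rw [hρdef]; ring
      rw [hφ'eq]
      simp [Complex.mul_re, Complex.sub_re, Complex.sub_im, Complex.mul_im,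
        Complex.conj_re, Complex.conj_im, Complex.ofReal_re, Complex.ofReal_im,
        Complex.sq_norm, Complex.normSq_apply]
      ring
    have hre2 : ((starRingEnd ℂ) (φ r) * ρ r).re ≤ ‖φ r‖ * ‖ρ r‖ := by
      calc ((starRingEnd ℂ) (φ r) * ρ r).re ≤ ‖(starRingEnd ℂ) (φ r) * ρ r‖ :=
            Complex.re_le_norm _
        _ = ‖φ r‖ * ‖ρ r‖ := by rw [norm_mul, RCLike.norm_conj]
    -- AM-GM
    set a := r ^ ((γ-1)/2) * ‖φ r‖ with hadef
    set b := r ^ ((γ+1)/2) * ‖ρ r‖ with hbdef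
    have ha2 : a^2 = r ^ (γ-1) * ‖φ r‖^2 := by
      rw [hadef, mul_pow, ← Real.rpow_natCast (r ^ ((γ-1)/2)) 2, ← Real.rpow_mul hrpos.le]
      norm_num
    have hb2 : b^2 = r ^ (γ+1) * ‖ρ r‖^2 := by
      rw [hbdef, mul_pow, ← Real.rpow_natCast (r ^ ((γ+1)/2)) 2, ← Real.rpow_mul hrpos.le]
      norm_num
    have hab : a * b = r ^ γ * (‖φ r‖ * ‖ρ r‖) := by
      rw [hadef, hbdef]
      have : r ^ ((γ-1)/2) * r ^ ((γ+1)/2) = r ^ γ := by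
        rw [← Real.rpow_add hrpos]; ring_nf
      calc r ^ ((γ-1)/2) * ‖φ r‖ * (r ^ ((γ+1)/2) * ‖ρ r‖)
          = r ^ ((γ-1)/2) * r ^ ((γ+1)/2) * (‖φ r‖ * ‖ρ r‖) := by ring
        _ = r ^ γ * (‖φ r‖ * ‖ρ r‖) := by rw [this]
    have hamgm : r ^ γ * (‖φ r‖ * ‖ρ r‖)
        ≤ γ/4 * (r ^ (γ-1) * ‖φ r‖^2) + γ⁻¹ * (r ^ (γ+1) * ‖ρ r‖^2) := by
      rw [← hab, ← ha2, ← hb2]; exact amgm_aux γ a b hγ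
    have hrγnn : (0:ℝ) ≤ r ^ γ := Real.rpow_nonneg hrpos.le γ
    have hmul2 : r ^ γ * ((starRingEnd ℂ) (φ r) * ρ r).re ≤ r ^ γ * (‖φ r‖ * ‖ρ r‖) :=
      mul_le_mul_of_nonneg_left hre2 hrγnn
    have hcterm : 0 ≤ r ^ γ * (c r * ‖φ r‖^2) := by
      have := hcpos r hr
      positivity
    have hAnn : (0:ℝ) ≤ γ/2 * (r ^ (γ-1) * ‖φ r‖^2) := by positivity
    simp only [hGdef, hHdef, hre1]
    nlinarith [hmul2, hamgm, hcterm, hAnn]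
  have hmono : ∫ t in r1..r2, H t ≤ ∫ t in r1..r2, G t :=
    intervalIntegral.integral_mono_on hr12 hHint hGint hpt
  have hHsplit : ∫ t in r1..r2, H t
      = γ/4 * (∫ t in r1..r2, t ^ (γ-1) * ‖φ t‖^2)
        - γ⁻¹ * (∫ t in r1..r2, t ^ (γ+1) * ‖ρ t‖^2) := by
    rw [hHdef]
    rw [intervalIntegral.integral_sub (hAint.const_mul _) (hBint.const_mul _),
      intervalIntegral.integral_const_mul, intervalIntegral.integral_const_mul]
  rw [hFTC, hHsplit] at hmono
  simp only [hFdef] at hmono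
  linarith
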